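/- arXiv:2509.20753 — 3 statements merged into one kernel-verified Lean document; each statement's English description precedes it below -/
import Mathlib

section
/- Let A be an n×n real symmetric negative definite matrix and let Ψ : [0,∞) → ℝ^{n×n} be differentiable with Ψ′(τ) = Ψ(τ) Aᵀ + A Ψ(τ) + 2I for all τ ≥ 0, where I is the n×n identity matrix. Then for any initial value Ψ(0), Ψ(τ) → (−A)⁻¹ as τ → ∞ (convergence entrywise, equivalently in any matrix norm). -/
open Matrix Filter

/-- Negative definiteness gives a uniform quadratic bound `xᵀAx ≤ -c * Σ xₖ²`. -/
lemma negdef_uniform_bound (n : ℕ) (A : Matrix (Fin n) (Fin n) ℝ)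
    (hA_neg : ∀ x : Fin n → ℝ, x ≠ 0 → x ⬝ᵥ (A *ᵥ x) < 0) :
    ∃ c : ℝ, 0 < c ∧ ∀ x : Fin n → ℝ, x ⬝ᵥ (A *ᵥ x) ≤ -c * ∑ k, (x k) ^ 2 := by
  rcases Nat.eq_zero_or_pos n with hn | hn
  · refine ⟨1, one_pos, fun x => ?_⟩
    subst hn
    simp [dotProduct]
  · haveI : Nontrivial (Fin n → ℝ) :=
      ⟨0, fun _ => 1, fun h => by simpa using congrFun h ⟨0, hn⟩⟩
    have hq : Continuous fun x : Fin n → ℝ => x ⬝ᵥ (A *ᵥ x) := by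
      simp only [dotProduct, Matrix.mulVec]
      fun_prop
    obtain ⟨x₀, hx₀S, hx₀max⟩ :=
      (isCompact_sphere (0 : Fin n → ℝ) 1).exists_isMaxOn
        (NormedSpace.sphere_nonempty.mpr zero_le_one) hq.continuousOn
    have hx₀norm : ‖x₀‖ = 1 := by simpa using hx₀S
    have hx₀ne : x₀ ≠ 0 := by
      intro h; rw [h] at hx₀norm; simp at hx₀norm
    set M : ℝ := x₀ ⬝ᵥ (A *ᵥ x₀) with hM
    have hMneg : M < 0 := hA_neg x₀ hx₀ne
    refine ⟨-M / n, div_pos (neg_pos.mpr hMneg) (by exact_mod_cast hn), fun x => ?_⟩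
    rcases eq_or_ne x 0 with rfl | hx
    · simp [dotProduct]
    · have hxn : (0 : ℝ) < ‖x‖ := norm_pos_iff.mpr hx
      set u : Fin n → ℝ := ‖x‖⁻¹ • x with hu
      have huS : u ∈ Metric.sphere (0 : Fin n → ℝ) 1 := by
        simp [hu, norm_smul, abs_of_pos (inv_pos.mpr hxn), inv_mul_cancel₀ hxn.ne']
      have hub : u ⬝ᵥ (A *ᵥ u) ≤ M := hx₀max huS
      have hxu : x = ‖x‖ • u := by
        rw [hu, smul_smul, mul_inv_cancel₀ hxn.ne', one_smul]
      have hq_scale : x ⬝ᵥ (A *ᵥ x) = ‖x‖ ^ 2 * (u ⬝ᵥ (A *ᵥ u)) := by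
        have hqu : u ⬝ᵥ (A *ᵥ u) = ‖x‖⁻¹ * (‖x‖⁻¹ * (x ⬝ᵥ (A *ᵥ x))) := by
          rw [hu, Matrix.mulVec_smul, dotProduct_smul, smul_dotProduct,
            smul_eq_mul, smul_eq_mul]
        rw [hqu]
        field_simp
      have hsum_le : ∑ k, (x k) ^ 2 ≤ n * ‖x‖ ^ 2 := by
        calc ∑ k, (x k) ^ 2 ≤ ∑ _k : Fin n, ‖x‖ ^ 2 := by
              refine Finset.sum_le_sum fun k _ => ?_
              have := norm_le_pi_norm x k
              calc (x k) ^ 2 = ‖x k‖ ^ 2 := by rw [Real.norm_eq_abs, sq_abs]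
                _ ≤ ‖x‖ ^ 2 := by
                    exact pow_le_pow_left₀ (norm_nonneg _) this 2
          _ = n * ‖x‖ ^ 2 := by simp [Finset.sum_const, nsmul_eq_mul]
      have hnpos : (0 : ℝ) < n := by exact_mod_cast hn
      calc x ⬝ᵥ (A *ᵥ x) = ‖x‖ ^ 2 * (u ⬝ᵥ (A *ᵥ u)) := hq_scale
        _ ≤ ‖x‖ ^ 2 * M := by
            exact mul_le_mul_of_nonneg_left hub (by positivity)
        _ = (M / n) * (n * ‖x‖ ^ 2) := by field_simp
        _ ≤ (M / n) * ∑ k, (x k) ^ 2 := by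
            apply mul_le_mul_of_nonpos_left hsum_le
            exact div_nonpos_of_nonpos_of_nonneg hMneg.le hnpos.le
        _ = -(-M / n) * ∑ k, (x k) ^ 2 := by ring
  
/-- A solution of the matrix ODE `Ψ' = Ψ Aᵀ + A Ψ + 2 I` on `[0, ∞)` with `A` real symmetric
negative definite converges (entrywise) to `(-A)⁻¹` as `τ → ∞`, for any initial value. -/
theorem stmt_3 (n : ℕ) (A : Matrix (Fin n) (Fin n) ℝ)
    (hA_symm : A.IsSymm)
    (hA_neg : ∀ x : Fin n → ℝ, x ≠ 0 → x ⬝ᵥ (A *ᵥ x) < 0)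
    (Ψ : ℝ → Matrix (Fin n) (Fin n) ℝ)
    (hΨ : ∀ τ : ℝ, 0 ≤ τ → ∀ i j, HasDerivWithinAt (fun t => Ψ t i j)
        ((Ψ τ * Aᵀ + A * Ψ τ + (2 : ℝ) • (1 : Matrix (Fin n) (Fin n) ℝ)) i j)
        (Set.Ici 0) τ) :
    ∀ i j, Tendsto (fun τ => Ψ τ i j) atTop (nhds ((-A)⁻¹ i j)) := by
  intro i j
  obtain ⟨c, hc, hbound⟩ := negdef_uniform_bound n A hA_neg
  have hAsym : ∀ a b, A a b = A b a := fun a b => hA_symm.apply b a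
  -- invertibility
  have hdet : A.det ≠ 0 := by
    intro h
    obtain ⟨v, hv, hAv⟩ := (Matrix.exists_mulVec_eq_zero_iff).mpr h
    have hlt := hA_neg v hv
    rw [hAv, dotProduct_zero] at hlt
    exact lt_irrefl 0 hlt
  have hdet' : IsUnit (-A).det := isUnit_iff_ne_zero.mpr (by
    rw [Matrix.det_neg]
    exact mul_ne_zero (pow_ne_zero _ (by norm_num)) hdet)
  set C : Matrix (Fin n) (Fin n) ℝ := (-A)⁻¹ with hCdef
  have hAC : A * C = -1 := by
    have h1 := Matrix.mul_nonsing_inv (-A) hdet'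
    rw [Matrix.neg_mul] at h1
    exact neg_eq_iff_eq_neg.mp h1
  have hCA : C * A = -1 := by
    have h1 := Matrix.nonsing_inv_mul (-A) hdet'
    rw [Matrix.mul_neg] at h1
    exact neg_eq_iff_eq_neg.mp h1
  set E : ℝ → Matrix (Fin n) (Fin n) ℝ := fun τ => Ψ τ - C with hEdef
  have hAT : Aᵀ = A := hA_symm
  have hID : ∀ τ, Ψ τ * Aᵀ + A * Ψ τ + (2 : ℝ) • (1 : Matrix (Fin n) (Fin n) ℝ)
      = E τ * A + A * E τ := by
    intro τ
    rw [hEdef]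
    simp only [Matrix.sub_mul, Matrix.mul_sub, hAT, hCA, hAC]
    rw [two_smul ℝ (1 : Matrix (Fin n) (Fin n) ℝ)]
    abel
  have hE' : ∀ τ, 0 ≤ τ → ∀ a b, HasDerivWithinAt (fun t => E t a b)
      ((E τ * A + A * E τ) a b) (Set.Ici 0) τ := by
    intro τ hτ a b
    have h := (hΨ τ hτ a b).sub_const (C a b)
    rw [hID τ] at h
    exact h
  set V : ℝ → ℝ := fun τ => ∑ a, ∑ b, (E τ a b) ^ 2 with hVdef
  set V' : ℝ → ℝ := fun τ => ∑ a, ∑ b, 2 * E τ a b * ((E τ * A + A * E τ) a b)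
    with hV'def
  have hVnonneg : ∀ τ, 0 ≤ V τ :=
    fun τ => Finset.sum_nonneg fun a _ => Finset.sum_nonneg fun b _ => sq_nonneg _
  have hV : ∀ τ ∈ Set.Ici (0:ℝ), HasDerivWithinAt V (V' τ) (Set.Ici 0) τ := by
    intro τ hτ
    apply HasDerivWithinAt.fun_sum
    intro a _
    apply HasDerivWithinAt.fun_sum
    intro b _
    have h := (hE' τ hτ a b).fun_pow 2
    exact h.congr_deriv (by push_cast; ring)
  have hV'le : ∀ τ, V' τ ≤ -(4 * c) * V τ := by
    intro τ
    have h1 : ∑ a, ∑ b, E τ a b * ((E τ * A) a b)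
        = ∑ a, (fun k => E τ a k) ⬝ᵥ (A *ᵥ fun k => E τ a k) := by
      refine Finset.sum_congr rfl fun a _ => ?_
      simp only [Matrix.mul_apply, dotProduct, Matrix.mulVec, Finset.mul_sum]
      refine Finset.sum_congr rfl fun b _ => Finset.sum_congr rfl fun k _ => ?_
      rw [hAsym k b]
      ring
    have h2 : ∑ a, ∑ b, E τ a b * ((A * E τ) a b)
        = ∑ b, (fun k => E τ k b) ⬝ᵥ (A *ᵥ fun k => E τ k b) := by
      rw [Finset.sum_comm]
      refine Finset.sum_congr rfl fun b _ => ?_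
      simp only [Matrix.mul_apply, dotProduct, Matrix.mulVec, Finset.mul_sum]
    have hsplit : V' τ = 2 * (∑ a, ∑ b, E τ a b * ((E τ * A) a b))
        + 2 * (∑ a, ∑ b, E τ a b * ((A * E τ) a b)) := by
      rw [hV'def]
      simp only [Matrix.add_apply, Finset.mul_sum, ← Finset.sum_add_distrib]
      refine Finset.sum_congr rfl fun a _ => Finset.sum_congr rfl fun b _ => ?_
      ring
    have hr : ∑ a, (fun k => E τ a k) ⬝ᵥ (A *ᵥ fun k => E τ a k) ≤ -c * V τ := by
      calc ∑ a, (fun k => E τ a k) ⬝ᵥ (A *ᵥ fun k => E τ a k)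
          ≤ ∑ a, -c * ∑ k, (E τ a k) ^ 2 :=
            Finset.sum_le_sum fun a _ => hbound _
        _ = -c * V τ := by simp only [hVdef, Finset.mul_sum]
    have hcol : ∑ b, (fun k => E τ k b) ⬝ᵥ (A *ᵥ fun k => E τ k b) ≤ -c * V τ := by
      calc ∑ b, (fun k => E τ k b) ⬝ᵥ (A *ᵥ fun k => E τ k b)
          ≤ ∑ b, -c * ∑ k, (E τ k b) ^ 2 :=
            Finset.sum_le_sum fun b _ => hbound _
        _ = -c * V τ := by
            simp only [hVdef, Finset.mul_sum]
            exact Finset.sum_comm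
    rw [hsplit, h1, h2]
    nlinarith [hr, hcol]
  set W : ℝ → ℝ := fun τ => V τ * Real.exp (4 * c * τ) with hWdef
  set G : ℝ → ℝ := fun τ => V' τ * Real.exp (4 * c * τ)
    + V τ * (Real.exp (4 * c * τ) * (4 * c)) with hGdef
  have hW : ∀ τ ∈ Set.Ici (0:ℝ), HasDerivWithinAt W (G τ) (Set.Ici 0) τ := by
    intro τ hτ
    have hlin : HasDerivAt (fun t : ℝ => 4 * c * t) (4 * c) τ := by
      simpa using (hasDerivAt_id τ).const_mul (4 * c)
    have he : HasDerivAt (fun t => Real.exp (4 * c * t))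
        (Real.exp (4 * c * τ) * (4 * c)) τ := hlin.exp
    exact (hV τ hτ).mul he.hasDerivWithinAt
  have hWanti : AntitoneOn W (Set.Ici 0) := by
    apply antitoneOn_of_hasDerivWithinAt_nonpos (convex_Ici 0)
      (fun τ hτ => (hW τ hτ).continuousWithinAt)
      (f' := G) (fun τ hτ => (hW τ (interior_subset hτ)).mono interior_subset)
    intro τ _
    have h1 := hV'le τ
    have h2 := hVnonneg τ
    have h3 := Real.exp_pos (4 * c * τ)
    simp only [hGdef]
    nlinarith [mul_le_mul_of_nonneg_right h1 h3.le]
  have hVle : ∀ τ, 0 ≤ τ → V τ ≤ V 0 * Real.exp (-(4 * c) * τ) := by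
    intro τ hτ
    have hm := hWanti Set.self_mem_Ici hτ hτ
    have hW0 : W 0 = V 0 := by simp [hWdef]
    rw [hW0] at hm
    have hexp := Real.exp_pos (4 * c * τ)
    rw [show -(4 * c) * τ = -(4 * c * τ) by ring, Real.exp_neg,
      ← div_eq_mul_inv, le_div_iff₀ hexp]
    exact hm
  have hV0 : Tendsto V atTop (nhds 0) := by
    have hub : Tendsto (fun τ => V 0 * Real.exp (-(4 * c) * τ)) atTop (nhds 0) := by
      have h1 : Tendsto (fun τ : ℝ => 4 * c * τ) atTop atTop :=
        Tendsto.const_mul_atTop (by positivity) tendsto_id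
      have h2 : Tendsto (fun τ : ℝ => -(4 * c) * τ) atTop atBot := by
        simp only [neg_mul]
        exact tendsto_neg_atTop_atBot.comp h1
      have h3 := Real.tendsto_exp_atBot.comp h2
      have h4 := h3.const_mul (V 0)
      simpa using h4
    refine tendsto_of_tendsto_of_tendsto_of_le_of_le' tendsto_const_nhds hub ?_ ?_
    · exact Eventually.of_forall hVnonneg
    · exact (eventually_ge_atTop 0).mono hVle
  have hEentry : ∀ τ, (E τ i j) ^ 2 ≤ V τ := by
    intro τ
    calc (E τ i j) ^ 2 ≤ ∑ b, (E τ i b) ^ 2 :=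
          Finset.single_le_sum (f := fun b => (E τ i b) ^ 2)
            (fun b _ => sq_nonneg _) (Finset.mem_univ j)
      _ ≤ V τ :=
          Finset.single_le_sum
            (f := fun a => ∑ b, (E τ a b) ^ 2)
            (fun a _ => Finset.sum_nonneg fun b _ => sq_nonneg _)
            (Finset.mem_univ i)
  have hE2 : Tendsto (fun τ => (E τ i j) ^ 2) atTop (nhds 0) :=
    tendsto_of_tendsto_of_tendsto_of_le_of_le tendsto_const_nhds hV0
      (fun τ => sq_nonneg _) hEentry
  have hEabs : Tendsto (fun τ => |E τ i j|) atTop (nhds 0) := by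
    have h := (Real.continuous_sqrt.tendsto 0).comp hE2
    simpa [Function.comp_def, Real.sqrt_sq_eq_abs] using h
  have hE0 : Tendsto (fun τ => E τ i j) atTop (nhds 0) := by
    have hneg : Tendsto (fun τ => -|E τ i j|) atTop (nhds 0) := by
      simpa using hEabs.neg
    exact tendsto_of_tendsto_of_tendsto_of_le_of_le hneg hEabs
      (fun τ => neg_abs_le _) (fun τ => le_abs_self _)
  have hfinal := hE0.add_const (C i j)
  rw [zero_add] at hfinal
  have heq : (fun τ => E τ i j + C i j) = fun τ => Ψ τ i j := by
    funext τ
    rw [hEdef]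
    simp [Matrix.sub_apply]
  rw [heq] at hfinal
  exact hfinal
end

section
/- Let P and Q be probability measures on ℝ^d with finite first moments. Then sup over h ∈ W₁ of |∫ h dP − ∫ h dQ| equals sup over h ∈ H of |∫ h dP − ∫ h dQ|, where W₁ is the set of all 1-Lipschitz functions h : ℝ^d → ℝ and H := { h ∈ C³(ℝ^d) : h ∈ W₁ and for each k ∈ {1,2,3}, sup_{x ∈ ℝ^d} ‖∇^k h(x)‖ < ∞ }. -/
open MeasureTheory Set Metric Function Filter ContinuousLinearMap
open scoped Convolution ENNReal Topology ContDiff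

noncomputable section

namespace Stmt8Aux

variable {d : ℕ}

local notation "𝔼" => EuclideanSpace ℝ (Fin d)

lemma norm_dist_aux {h : 𝔼 → ℝ} (hl : LipschitzWith 1 h) (x : 𝔼) :
    |h x - h 0| ≤ ‖x‖ := by
  have := hl.dist_le_mul x 0
  simpa [Real.dist_eq, dist_eq_norm] using this

lemma integrable_of_lip (P : Measure 𝔼) [IsProbabilityMeasure P]
    (hP : Integrable (fun x => ‖x‖) P) {h : 𝔼 → ℝ} (hl : LipschitzWith 1 h) :
    Integrable h P := by
  refine ((integrable_const (|h 0|)).add hP).mono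
    hl.continuous.aestronglyMeasurable (Eventually.of_forall fun x => ?_)
  have h1 : |h x - h 0| ≤ ‖x‖ := norm_dist_aux hl x
  have h2 : (0 : ℝ) ≤ |h 0| + ‖x‖ := by positivity
  simp only [Pi.add_apply, Real.norm_eq_abs]
  rw [abs_of_nonneg h2]
  calc |h x| = |h 0 + (h x - h 0)| := by ring_nf
    _ ≤ |h 0| + |h x - h 0| := abs_add_le _ _
    _ ≤ |h 0| + ‖x‖ := by linarith

/-- Basic bound: for a `1`-Lipschitz function the difference of integrals is at most
the sum of first moments. -/
lemma diff_integral_bound (P Q : Measure 𝔼) [IsProbabilityMeasure P] [IsProbabilityMeasure Q]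
    (hP : Integrable (fun x => ‖x‖) P) (hQ : Integrable (fun x => ‖x‖) Q)
    {h : 𝔼 → ℝ} (hl : LipschitzWith 1 h) :
    |(∫ x, h x ∂P) - ∫ x, h x ∂Q| ≤ (∫ x, ‖x‖ ∂P) + ∫ x, ‖x‖ ∂Q := by
  have hiP : Integrable h P := integrable_of_lip P hP hl
  have hiQ : Integrable h Q := integrable_of_lip Q hQ hl
  have eP : ∫ x, (h x - h 0) ∂P = (∫ x, h x ∂P) - h 0 := by
    rw [integral_sub hiP (integrable_const _), integral_const]
    simp
  have eQ : ∫ x, (h x - h 0) ∂Q = (∫ x, h x ∂Q) - h 0 := by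
    rw [integral_sub hiQ (integrable_const _), integral_const]
    simp
  have bP : |∫ x, (h x - h 0) ∂P| ≤ ∫ x, ‖x‖ ∂P := by
    rw [← Real.norm_eq_abs]
    refine (norm_integral_le_integral_norm _).trans ?_
    refine integral_mono (hiP.sub (integrable_const _)).norm hP fun x => ?_
    simpa [Real.norm_eq_abs] using norm_dist_aux hl x
  have bQ : |∫ x, (h x - h 0) ∂Q| ≤ ∫ x, ‖x‖ ∂Q := by
    rw [← Real.norm_eq_abs]
    refine (norm_integral_le_integral_norm _).trans ?_
    refine integral_mono (hiQ.sub (integrable_const _)).norm hQ fun x => ?_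
    simpa [Real.norm_eq_abs] using norm_dist_aux hl x
  rw [eP] at bP
  rw [eQ] at bQ
  obtain ⟨hP1, hP2⟩ := abs_le.1 bP
  obtain ⟨hQ1, hQ2⟩ := abs_le.1 bQ
  rw [abs_le]
  constructor <;> linarith

/-- Norm bound of a convolution with a bounded function. -/
lemma norm_convolution_le {V W : Type*} [NormedAddCommGroup V] [NormedSpace ℝ V]
    [NormedAddCommGroup W] [NormedSpace ℝ W]
    (L : V →L[ℝ] ℝ →L[ℝ] W) {f : 𝔼 → V} {g : 𝔼 → ℝ} {M : ℝ}
    (hf : Integrable f (volume : Measure 𝔼)) (hg : ∀ x, |g x| ≤ M) (x : 𝔼) :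
    ‖(f ⋆[L, (volume : Measure 𝔼)] g) x‖ ≤ ‖L‖ * (∫ t, ‖f t‖) * M := by
  rw [convolution_def]
  have hb : ∀ t : 𝔼, ‖L (f t) (g (x - t))‖ ≤ ‖L‖ * ‖f t‖ * M := fun t => by
    refine (L.le_opNorm₂ (f t) (g (x - t))).trans ?_
    have h1 : ‖g (x - t)‖ ≤ M := by simpa [Real.norm_eq_abs] using hg (x - t)
    have h2 : (0 : ℝ) ≤ ‖L‖ * ‖f t‖ := by positivity
    exact mul_le_mul_of_nonneg_left h1 h2
  refine (norm_integral_le_of_norm_le ((hf.norm.const_mul ‖L‖).mul_const M)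
    (Eventually.of_forall hb)).trans_eq ?_
  rw [integral_mul_const, integral_const_mul]

/-- Convolution of a normed bump function with a `1`-Lipschitz function is `1`-Lipschitz. -/
lemma lipschitz_conv (φ : ContDiffBump (0 : 𝔼)) {h : 𝔼 → ℝ} (hl : LipschitzWith 1 h) :
    LipschitzWith 1 (φ.normed (volume : Measure 𝔼) ⋆[lsmul ℝ ℝ, volume] h) := by
  have hce : ConvolutionExists (φ.normed volume) h (lsmul ℝ ℝ) (volume : Measure 𝔼) :=
    HasCompactSupport.convolutionExists_left_of_continuous_right _ φ.hasCompactSupport_normed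
      (φ.continuous_normed.locallyIntegrable) hl.continuous
  refine LipschitzWith.of_dist_le_mul fun x y => ?_
  rw [NNReal.coe_one, one_mul, dist_eq_norm]
  rw [show dist x y = dist x y from rfl]
  have e : (φ.normed (volume : Measure 𝔼) ⋆[lsmul ℝ ℝ, volume] h) x -
      (φ.normed (volume : Measure 𝔼) ⋆[lsmul ℝ ℝ, volume] h) y
      = ∫ t, φ.normed volume t • (h (x - t) - h (y - t)) := by
    rw [convolution_def, convolution_def, ← integral_sub (hce x) (hce y)]
    simp_rw [lsmul_apply, ← smul_sub]
  rw [e]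
  have hb : ∀ t : 𝔼, ‖φ.normed volume t • (h (x - t) - h (y - t))‖
      ≤ φ.normed volume t * dist x y := fun t => by
    rw [norm_smul, Real.norm_of_nonneg (φ.nonneg_normed t)]
    refine mul_le_mul_of_nonneg_left ?_ (φ.nonneg_normed t)
    have := hl.dist_le_mul (x - t) (y - t)
    simpa [Real.dist_eq, dist_eq_norm, sub_sub_sub_cancel_right] using this
  refine (norm_integral_le_of_norm_le (φ.integrable_normed.mul_const _)
    (Eventually.of_forall hb)).trans_eq ?_
  rw [integral_mul_const, φ.integral_normed, one_mul, dist_eq_norm]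

/-- The truncation of a `1`-Lipschitz function is pointwise close to it away from a ball. -/
lemma trunc_close {h : 𝔼 → ℝ} (hl : LipschitzWith 1 h) {R : ℝ} (hR : 0 ≤ R) (x : 𝔼) :
    |max (min (h x) (h 0 + R)) (h 0 - R) - h x|
      ≤ indicator {t : 𝔼 | R < ‖t‖} (fun t => ‖t‖) x := by
  have hb := abs_le.1 (norm_dist_aux hl x)
  by_cases hx : R < ‖x‖
  · rw [indicator_of_mem (show x ∈ {t : 𝔼 | R < ‖t‖} from hx)]
    rcases le_total (h x) (h 0 + R) with h1 | h1
    · rw [min_eq_left h1]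
      rcases le_total (h 0 - R) (h x) with h2 | h2
      · rw [max_eq_left h2]; simpa using norm_nonneg x
      · rw [max_eq_right h2, abs_le]; constructor <;> cases hb <;> linarith
    · rw [min_eq_right h1, max_eq_left (by linarith), abs_le]
      constructor <;> cases hb <;> linarith
  · rw [indicator_of_notMem (show x ∉ {t : 𝔼 | R < ‖t‖} from hx)]
    push_neg at hx
    have h1 : h x ≤ h 0 + R := by cases hb with | intro a b => linarith
    have h2 : h 0 - R ≤ h x := by cases hb with | intro a b => linarith
    rw [min_eq_left h1, max_eq_left h2, sub_self, abs_zero]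

/-- Tails of the first moment are small. -/
lemma tail_small (P : Measure 𝔼) [IsProbabilityMeasure P]
    (hP : Integrable (fun x => ‖x‖) P) {ε : ℝ} (hε : 0 < ε) :
    ∃ R : ℝ, 0 < R ∧ ∫ x, indicator {t : 𝔼 | R < ‖t‖} (fun t => ‖t‖) x ∂P ≤ ε := by
  have hsm : ∀ n : ℕ, MeasurableSet (closedBall (0 : 𝔼) n) := fun n => measurableSet_closedBall
  have hmono : Monotone fun n : ℕ => closedBall (0 : 𝔼) n := fun i j hij =>
    closedBall_subset_closedBall (by exact_mod_cast hij)
  have hU : (⋃ n : ℕ, closedBall (0 : 𝔼) n) = univ := iUnion_closedBall_nat 0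
  have htend := tendsto_setIntegral_of_monotone hsm hmono
    (by rw [hU]; exact hP.integrableOn) (μ := P) (f := fun x => ‖x‖)
  rw [hU, Measure.restrict_univ] at htend
  have : ∀ᶠ n : ℕ in Filter.atTop,
      (∫ x, ‖x‖ ∂P) - ε ≤ ∫ x in closedBall (0 : 𝔼) n, ‖x‖ ∂P := by
    filter_upwards [htend.eventually
      (eventually_gt_nhds (by linarith : (∫ x, ‖x‖ ∂P) - ε < ∫ x, ‖x‖ ∂P))] with n hn
    linarith
  obtain ⟨n, hn⟩ := this.exists
  refine ⟨(n : ℝ) + 1, by positivity, ?_⟩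
  have hmeas : MeasurableSet {t : 𝔼 | (n : ℝ) + 1 < ‖t‖} :=
    (isOpen_lt continuous_const continuous_norm).measurableSet
  rw [integral_indicator hmeas]
  have hsub : {t : 𝔼 | (n : ℝ) + 1 < ‖t‖} ⊆ (closedBall (0 : 𝔼) n)ᶜ := by
    intro t ht
    simp only [mem_compl_iff, mem_closedBall, dist_zero_right, not_le]
    exact lt_of_le_of_lt (by linarith) ht
  have h1 : ∫ x in {t : 𝔼 | (n : ℝ) + 1 < ‖t‖}, ‖x‖ ∂P
      ≤ ∫ x in (closedBall (0 : 𝔼) n)ᶜ, ‖x‖ ∂P := by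
    refine setIntegral_mono_set hP.integrableOn
      (Eventually.of_forall fun x => norm_nonneg x) (HasSubset.Subset.eventuallyLE hsub)
  have h2 : (∫ x in closedBall (0 : 𝔼) n, ‖x‖ ∂P)
      + ∫ x in (closedBall (0 : 𝔼) n)ᶜ, ‖x‖ ∂P = ∫ x, ‖x‖ ∂P :=
    integral_add_compl (hsm n) hP
  linarith



/-- Iterated derivatives of a convolution of a smooth compactly supported function with a
bounded function are bounded, any order. -/
lemma bdd_iter {M : ℝ} {hT : 𝔼 → ℝ} (hTb : ∀ x, |hT x| ≤ M)
    (hTc : Continuous hT) :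
    ∀ (k : ℕ) (V W : Type) (_ : NormedAddCommGroup V) (_ : NormedSpace ℝ V)
      (_ : NormedAddCommGroup W) (_ : NormedSpace ℝ W)
      (L : V →L[ℝ] ℝ →L[ℝ] W) (f : 𝔼 → V),
      HasCompactSupport f → ContDiff ℝ ∞ f →
      ∃ C : ℝ, ∀ x, ‖iteratedFDeriv ℝ k (f ⋆[L, (volume : Measure 𝔼)] hT) x‖ ≤ C := by
  intro k
  induction k with
  | zero =>
    intro V W _ _ _ _ L f hc hs
    refine ⟨‖L‖ * (∫ t, ‖f t‖) * M, fun x => ?_⟩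
    rw [norm_iteratedFDeriv_zero]
    exact norm_convolution_le L (hs.continuous.integrable_of_hasCompactSupport hc) hTb x
  | succ n ih =>
    intro V W _ _ _ _ L f hc hs
    obtain ⟨C, hC⟩ := ih (𝔼 →L[ℝ] V) (𝔼 →L[ℝ] W) inferInstance inferInstance inferInstance
      inferInstance (L.precompL 𝔼) (fderiv ℝ f) (hc.fderiv ℝ) (hs.fderiv_right (by norm_num))
    refine ⟨C, fun x => ?_⟩
    have hd : fderiv ℝ (f ⋆[L, (volume : Measure 𝔼)] hT)
        = (fderiv ℝ f) ⋆[L.precompL 𝔼, (volume : Measure 𝔼)] hT :=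
      funext fun y => (hc.hasFDerivAt_convolution_left L (hs.of_le (by norm_num))
        hTc.locallyIntegrable y).fderiv
    rw [← norm_iteratedFDeriv_fderiv, hd]
    exact hC x

set_option maxHeartbeats 1000000 in
/-- Main approximation step: any `1`-Lipschitz test function can be replaced, up to `ε`,
by a `1`-Lipschitz `C³` function with bounded derivatives of orders one to three. -/
lemma approx (P Q : Measure 𝔼) [IsProbabilityMeasure P] [IsProbabilityMeasure Q]
    (hP : Integrable (fun x => ‖x‖) P) (hQ : Integrable (fun x => ‖x‖) Q)
    {h : 𝔼 → ℝ} (hl : LipschitzWith 1 h) {ε : ℝ} (hε : 0 < ε) :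
    ∃ g : 𝔼 → ℝ, ContDiff ℝ 3 g ∧ LipschitzWith 1 g ∧
      (∀ k : ℕ, 1 ≤ k → k ≤ 3 → ∃ C : ℝ, ∀ x, ‖iteratedFDeriv ℝ k g x‖ ≤ C) ∧
      |(∫ x, h x ∂P) - ∫ x, h x ∂Q| ≤ |(∫ x, g x ∂P) - ∫ x, g x ∂Q| + ε := by
  obtain ⟨R₁, hR₁pos, hT₁⟩ := tail_small P hP (by linarith : (0:ℝ) < ε / 8)
  obtain ⟨R₂, hR₂pos, hT₂⟩ := tail_small Q hQ (by linarith : (0:ℝ) < ε / 8)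
  set R : ℝ := max R₁ R₂ with hRdef
  have hR0 : 0 ≤ R := le_trans hR₁pos.le (le_max_left _ _)
  have hmeasR : MeasurableSet {t : 𝔼 | R < ‖t‖} :=
    (isOpen_lt continuous_const continuous_norm).measurableSet
  have hmeasR₁ : MeasurableSet {t : 𝔼 | R₁ < ‖t‖} :=
    (isOpen_lt continuous_const continuous_norm).measurableSet
  have hmeasR₂ : MeasurableSet {t : 𝔼 | R₂ < ‖t‖} :=
    (isOpen_lt continuous_const continuous_norm).measurableSet
  have hss₁ : {t : 𝔼 | R < ‖t‖} ⊆ {t : 𝔼 | R₁ < ‖t‖} := fun t ht => by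
    simp only [mem_setOf_eq] at ht ⊢
    exact lt_of_le_of_lt (le_max_left _ _) ht
  have hss₂ : {t : 𝔼 | R < ‖t‖} ⊆ {t : 𝔼 | R₂ < ‖t‖} := fun t ht => by
    simp only [mem_setOf_eq] at ht ⊢
    exact lt_of_le_of_lt (le_max_right _ _) ht
  have hptP : ∀ x : 𝔼, indicator {t : 𝔼 | R < ‖t‖} (fun t => ‖t‖) x
      ≤ indicator {t : 𝔼 | R₁ < ‖t‖} (fun t => ‖t‖) x := fun x =>
    indicator_le_indicator_of_subset hss₁ (fun a => norm_nonneg a) x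
  have hptQ : ∀ x : 𝔼, indicator {t : 𝔼 | R < ‖t‖} (fun t => ‖t‖) x
      ≤ indicator {t : 𝔼 | R₂ < ‖t‖} (fun t => ‖t‖) x := fun x =>
    indicator_le_indicator_of_subset hss₂ (fun a => norm_nonneg a) x
  have hTP : ∫ x, indicator {t : 𝔼 | R < ‖t‖} (fun t => ‖t‖) x ∂P ≤ ε / 8 :=
    le_trans (integral_mono (hP.indicator hmeasR) (hP.indicator hmeasR₁) hptP) hT₁
  have hTQ : ∫ x, indicator {t : 𝔼 | R < ‖t‖} (fun t => ‖t‖) x ∂Q ≤ ε / 8 :=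
    le_trans (integral_mono (hQ.indicator hmeasR) (hQ.indicator hmeasR₂) hptQ) hT₂
  -- truncation
  set hT : 𝔼 → ℝ := fun x => max (min (h x) (h 0 + R)) (h 0 - R) with hTdef
  have hTlip : LipschitzWith 1 hT := (hl.min_const _).max_const _
  have hTbd : ∀ x, |hT x| ≤ |h 0| + R := by
    intro x
    have b1 : hT x ≤ h 0 + R := max_le (min_le_right _ _) (by linarith)
    have b2 : h 0 - R ≤ hT x := le_max_right _ _
    have hc1 := le_abs_self (h 0)
    have hc2 := neg_abs_le (h 0)
    rw [abs_le]; constructor <;> linarith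
  have hTclose : ∀ x, |hT x - h x| ≤ indicator {t : 𝔼 | R < ‖t‖} (fun t => ‖t‖) x :=
    trunc_close hl hR0
  -- mollification
  set δ : ℝ := ε / 8 with hδdef
  have hδpos : 0 < δ := by positivity
  set φ : ContDiffBump (0 : 𝔼) := ⟨δ / 2, δ, by positivity, by linarith⟩ with hφdef
  set f0 : 𝔼 → ℝ := φ.normed (volume : Measure 𝔼) with hf0def
  set L0 : ℝ →L[ℝ] ℝ →L[ℝ] ℝ := lsmul ℝ ℝ with hL0def
  set g : 𝔼 → ℝ := f0 ⋆[L0, (volume : Measure 𝔼)] hT with hgdef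
  have hloc : LocallyIntegrable hT (volume : Measure 𝔼) :=
    hTlip.continuous.locallyIntegrable
  have glip : LipschitzWith 1 g := lipschitz_conv φ hTlip
  have gsmooth : ContDiff ℝ 3 g :=
    HasCompactSupport.contDiff_convolution_left L0 φ.hasCompactSupport_normed
      φ.contDiff_normed hloc
  -- closeness of the convolution
  have hclose : ∀ x, |g x - hT x| ≤ δ := by
    intro x
    have := φ.dist_normed_convolution_le (μ := (volume : Measure 𝔼))
      hTlip.continuous.aestronglyMeasurable (x₀ := x) (ε := δ) (fun y hy => by
        have h1 := hTlip.dist_le_mul y x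
        have h2 : dist y x < δ := mem_ball.1 hy
        simpa using h1.trans (by simpa using h2.le))
    simpa [Real.dist_eq, hgdef, hf0def, hL0def] using this
  -- pointwise bound for |g - h|
  have hpt : ∀ x, ‖g x - h x‖ ≤ δ + indicator {t : 𝔼 | R < ‖t‖} (fun t => ‖t‖) x := by
    intro x
    have := abs_sub_le (g x) (hT x) (h x)
    simp only [Real.norm_eq_abs]
    have h1 := hclose x
    have h2 := hTclose x
    linarith
  -- integrability
  have hhintP : Integrable h P := integrable_of_lip P hP hl
  have hhintQ : Integrable h Q := integrable_of_lip Q hQ hl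
  have hgintP : Integrable g P := integrable_of_lip P hP glip
  have hgintQ : Integrable g Q := integrable_of_lip Q hQ glip
  -- integral error bounds
  have errP : |(∫ x, g x ∂P) - ∫ x, h x ∂P| ≤ ε / 4 := by
    rw [← integral_sub hgintP hhintP, ← Real.norm_eq_abs]
    calc ‖∫ x, (g x - h x) ∂P‖ ≤ ∫ x, ‖g x - h x‖ ∂P := norm_integral_le_integral_norm _
      _ ≤ ∫ x, (δ + indicator {t : 𝔼 | R < ‖t‖} (fun t => ‖t‖) x) ∂P :=
          integral_mono (hgintP.sub hhintP).norm
            ((integrable_const δ).add (hP.indicator hmeasR)) hpt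
      _ = δ + ∫ x, indicator {t : 𝔼 | R < ‖t‖} (fun t => ‖t‖) x ∂P := by
          rw [integral_add (integrable_const δ) (hP.indicator hmeasR), integral_const]
          simp
      _ ≤ ε / 4 := by rw [hδdef]; linarith
  have errQ : |(∫ x, g x ∂Q) - ∫ x, h x ∂Q| ≤ ε / 4 := by
    rw [← integral_sub hgintQ hhintQ, ← Real.norm_eq_abs]
    calc ‖∫ x, (g x - h x) ∂Q‖ ≤ ∫ x, ‖g x - h x‖ ∂Q := norm_integral_le_integral_norm _
      _ ≤ ∫ x, (δ + indicator {t : 𝔼 | R < ‖t‖} (fun t => ‖t‖) x) ∂Q :=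
          integral_mono (hgintQ.sub hhintQ).norm
            ((integrable_const δ).add (hQ.indicator hmeasR)) hpt
      _ = δ + ∫ x, indicator {t : 𝔼 | R < ‖t‖} (fun t => ‖t‖) x ∂Q := by
          rw [integral_add (integrable_const δ) (hQ.indicator hmeasR), integral_const]
          simp
      _ ≤ ε / 4 := by rw [hδdef]; linarith
  refine ⟨g, gsmooth, glip, ?_, ?_⟩
  · intro k _ _
    exact bdd_iter hTbd hTlip.continuous k ℝ ℝ inferInstance inferInstance inferInstance
      inferInstance L0 f0 φ.hasCompactSupport_normed φ.contDiff_normed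
  · have t1 := abs_sub_le (∫ x, h x ∂P) (∫ x, g x ∂P) (∫ x, h x ∂Q)
    have t2 := abs_sub_le (∫ x, g x ∂P) (∫ x, g x ∂Q) (∫ x, h x ∂Q)
    have e1 : |(∫ x, h x ∂P) - ∫ x, g x ∂P| ≤ ε / 4 := by
      rw [abs_sub_comm]; exact errP
    have e2 : |(∫ x, g x ∂Q) - ∫ x, h x ∂Q| ≤ ε / 4 := errQ
    linarith

end Stmt8Aux

open Stmt8Aux in
/-- Lemma `wass_1` of the paper: for probability measures on ℝ^d with finite first moments,
the supremum of `|∫ h dP - ∫ h dQ|` over all 1-Lipschitz functions `h` equals the supremum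
over 1-Lipschitz `C³` functions with bounded derivatives of orders one to three. -/
theorem stmt_8 (d : ℕ) (P Q : Measure (EuclideanSpace ℝ (Fin d)))
    [IsProbabilityMeasure P] [IsProbabilityMeasure Q]
    (hP : Integrable (fun x => ‖x‖) P) (hQ : Integrable (fun x => ‖x‖) Q) :
    sSup {r : ℝ | ∃ h : EuclideanSpace ℝ (Fin d) → ℝ, LipschitzWith 1 h ∧
        r = |(∫ x, h x ∂P) - ∫ x, h x ∂Q|} =
    sSup {r : ℝ | ∃ h : EuclideanSpace ℝ (Fin d) → ℝ, ContDiff ℝ 3 h ∧ LipschitzWith 1 h ∧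
        (∀ k : ℕ, 1 ≤ k → k ≤ 3 → ∃ C : ℝ, ∀ x, ‖iteratedFDeriv ℝ k h x‖ ≤ C) ∧
        r = |(∫ x, h x ∂P) - ∫ x, h x ∂Q|} := by
  set S₁ := {r : ℝ | ∃ h : EuclideanSpace ℝ (Fin d) → ℝ, LipschitzWith 1 h ∧
      r = |(∫ x, h x ∂P) - ∫ x, h x ∂Q|} with hS₁
  set S₂ := {r : ℝ | ∃ h : EuclideanSpace ℝ (Fin d) → ℝ, ContDiff ℝ 3 h ∧ LipschitzWith 1 h ∧
      (∀ k : ℕ, 1 ≤ k → k ≤ 3 → ∃ C : ℝ, ∀ x, ‖iteratedFDeriv ℝ k h x‖ ≤ C) ∧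
      r = |(∫ x, h x ∂P) - ∫ x, h x ∂Q|} with hS₂
  have hsub : S₂ ⊆ S₁ := by
    rintro r ⟨h, _, hl, _, rfl⟩
    exact ⟨h, hl, rfl⟩
  have hBdd₁ : BddAbove S₁ := by
    refine ⟨(∫ x, ‖x‖ ∂P) + ∫ x, ‖x‖ ∂Q, ?_⟩
    rintro r ⟨h, hl, rfl⟩
    exact diff_integral_bound P Q hP hQ hl
  have hBdd₂ : BddAbove S₂ := hBdd₁.mono hsub
  have hmem₂ : (0 : ℝ) ∈ S₂ := by
    refine ⟨fun _ => 0, contDiff_const, (LipschitzWith.const 0).weaken zero_le_one,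
      fun k hk1 _ => ⟨0, fun x => ?_⟩, by simp⟩
    rw [iteratedFDeriv_const_of_ne (by omega)]
    simp
  have hne₂ : S₂.Nonempty := ⟨0, hmem₂⟩
  have hne₁ : S₁.Nonempty := ⟨0, hsub hmem₂⟩
  refine le_antisymm ?_ (csSup_le_csSup hBdd₁ hne₂ hsub)
  refine csSup_le hne₁ ?_
  rintro r ⟨h, hl, rfl⟩
  refine le_of_forall_pos_le_add fun ε hε => ?_
  obtain ⟨g, gsmooth, glip, gbd, gle⟩ := approx P Q hP hQ hl hε
  have hmem : |(∫ x, g x ∂P) - ∫ x, g x ∂Q| ∈ S₂ := ⟨g, gsmooth, glip, gbd, rfl⟩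
  have := le_csSup hBdd₂ hmem
  linarith
end
end

section
/- Let A be an n×n real symmetric negative definite matrix and let Δτ > 0 satisfy Δτ · ‖A‖₂ < 1, where ‖A‖₂ is the operator norm induced by the Euclidean norm (equal to the largest eigenvalue of −A). Define the iteration Ψ_{k+1} := Ψ_k + ( Ψ_k Aᵀ + A Ψ_k + 2I ) Δτ, where I is the n×n identity matrix. Then for any initial n×n real matrix Ψ₀, the sequence Ψ_k converges to (−A)⁻¹ as k → ∞. -/
open Matrix Filter

/-- Convergence of the Euler iteration for the Lyapunov equation (Stage 2 of the two-stage
RAPTOR-GEN algorithm): for `A` real symmetric negative definite with Euclidean operator norm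
`‖A‖₂` (the largest eigenvalue of `-A`) and step size `Δτ > 0` with `Δτ ‖A‖₂ < 1`, the
iteration `Ψ_{k+1} = Ψ_k + (Ψ_k Aᵀ + A Ψ_k + 2 I) Δτ` converges to `(-A)⁻¹` from any initial
value. -/
theorem stmt_16 (n : ℕ) (A : Matrix (Fin n) (Fin n) ℝ)
    (hA_symm : A.IsSymm)
    (hA_neg : ∀ x : Fin n → ℝ, x ≠ 0 → x ⬝ᵥ (A *ᵥ x) < 0)
    -- `normA` is the largest eigenvalue of `-A`, i.e. the Euclidean operator norm of `A`
    (normA : ℝ)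
    (hnorm_ub : ∀ (c : ℝ) (v : Fin n → ℝ), v ≠ 0 → A *ᵥ v = c • v → -normA ≤ c)
    (hnorm_mem : ∃ v : Fin n → ℝ, v ≠ 0 ∧ A *ᵥ v = (-normA) • v)
    (Δτ : ℝ) (hΔτ : 0 < Δτ) (hstep : Δτ * normA < 1)
    (Ψ : ℕ → Matrix (Fin n) (Fin n) ℝ)
    (hΨ : ∀ k, Ψ (k + 1) = Ψ k +
      Δτ • (Ψ k * Aᵀ + A * Ψ k + (2 : ℝ) • (1 : Matrix (Fin n) (Fin n) ℝ))) :
    ∀ i j, Tendsto (fun k => Ψ k i j) atTop (nhds ((-A)⁻¹ i j)) := by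
  have hA : A.IsHermitian := by
    rw [Matrix.IsHermitian]
    ext i j
    simpa [Matrix.conjTranspose_apply] using congrFun (congrFun hA_symm i) j
  set U : Matrix (Fin n) (Fin n) ℝ := (hA.eigenvectorUnitary : Matrix (Fin n) (Fin n) ℝ)
    with hU_def
  set μ : Fin n → ℝ := hA.eigenvalues with hμ_def
  have hUU : star U * U = 1 := Unitary.coe_star_mul_self hA.eigenvectorUnitary
  have hUU' : U * star U = 1 := Unitary.coe_mul_star_self hA.eigenvectorUnitary
  have hDiag : star U * A * U = diagonal μ := by
    have := hA.conjStarAlgAut_star_eigenvectorUnitary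
    simpa [Unitary.conjStarAlgAut_star_apply, RCLike.ofReal_real_eq_id] using this
  -- eigenvector facts
  have hvec : ∀ a : Fin n, (⇑(hA.eigenvectorBasis a) : Fin n → ℝ) ≠ 0 ∧
      A *ᵥ ⇑(hA.eigenvectorBasis a) = μ a • ⇑(hA.eigenvectorBasis a) := by
    intro a
    refine ⟨?_, hA.mulVec_eigenvectorBasis a⟩
    intro h
    have h0 := hA.eigenvectorBasis.orthonormal.ne_zero a
    apply h0
    ext i
    exact congrFun h i
  have hμ_neg : ∀ a, μ a < 0 := by
    intro a
    obtain ⟨hne, heig⟩ := hvec a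
    have hlt := hA_neg _ hne
    rw [heig] at hlt
    have hdot : (⇑(hA.eigenvectorBasis a) : Fin n → ℝ) ⬝ᵥ
        (μ a • ⇑(hA.eigenvectorBasis a)) =
        μ a * ((⇑(hA.eigenvectorBasis a) : Fin n → ℝ) ⬝ᵥ ⇑(hA.eigenvectorBasis a)) := by
      simp only [dotProduct, Pi.smul_apply, smul_eq_mul, Finset.mul_sum]
      exact Finset.sum_congr rfl fun i _ => by ring
    rw [hdot] at hlt
    have hself : 0 ≤ (⇑(hA.eigenvectorBasis a) : Fin n → ℝ) ⬝ᵥ ⇑(hA.eigenvectorBasis a) :=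
      Finset.sum_nonneg fun i _ => mul_self_nonneg _
    nlinarith
  have hμ_lb : ∀ a, -normA ≤ μ a := by
    intro a
    obtain ⟨hne, heig⟩ := hvec a
    exact hnorm_ub _ _ hne heig
  -- invertibility of -A
  have hdetA : A.det ≠ 0 := by
    have hd : A.det = ∏ a, μ a := by
      have := hA.det_eq_prod_eigenvalues
      simpa using this
    rw [hd]
    exact Finset.prod_ne_zero_iff.mpr fun a _ => ne_of_lt (hμ_neg a)
  have hdet : IsUnit (-A).det := by
    rw [Matrix.det_neg]
    exact (isUnit_iff_ne_zero).mpr (by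
      exact mul_ne_zero (pow_ne_zero _ (by norm_num)) hdetA)
  have h1 : A * (-A)⁻¹ = -1 := by
    have h := Matrix.mul_nonsing_inv (-A) hdet
    calc A * (-A)⁻¹ = -(-A * (-A)⁻¹) := by rw [neg_mul, neg_neg]
      _ = -1 := by rw [h]
  have h2 : (-A)⁻¹ * A = -1 := by
    have h := Matrix.nonsing_inv_mul (-A) hdet
    calc (-A)⁻¹ * A = -((-A)⁻¹ * -A) := by rw [mul_neg, neg_neg]
      _ = -1 := by rw [h]
  have hAT : Aᵀ = A := hA_symm
  -- error recursion
  set P : Matrix (Fin n) (Fin n) ℝ := (-A)⁻¹ with hP_def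
  set E : ℕ → Matrix (Fin n) (Fin n) ℝ := fun k => Ψ k - P with hE_def
  have hE : ∀ k, E (k + 1) = E k + Δτ • (E k * A + A * E k) := by
    intro k
    have key : E k * A + A * E k = Ψ k * A + A * Ψ k + (2 : ℝ) • (1 : Matrix (Fin n) (Fin n) ℝ) := by
      simp only [hE_def, Matrix.sub_mul, Matrix.mul_sub, h1, h2]
      rw [two_smul]
      abel
    simp only [hE_def]
    rw [hΨ k, hAT, key]
    abel
  -- conjugated error
  set F : ℕ → Matrix (Fin n) (Fin n) ℝ := fun k => star U * E k * U with hF_def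
  have hFrec : ∀ k, F (k + 1) = F k + Δτ • (F k * diagonal μ + diagonal μ * F k) := by
    intro k
    simp only [hF_def, hE k]
    rw [← hDiag]
    have e1 : star U * (E k * A) * U = (star U * E k * U) * (star U * A * U) := by
      rw [show (star U * E k * U) * (star U * A * U) = star U * E k * (U * star U) * A * U by
        noncomm_ring]
      rw [hUU']
      noncomm_ring
    have e2 : star U * (A * E k) * U = (star U * A * U) * (star U * E k * U) := by
      rw [show (star U * A * U) * (star U * E k * U) = star U * A * (U * star U) * E k * U by
        noncomm_ring]
      rw [hUU']
      noncomm_ring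
    rw [Matrix.mul_add, Matrix.add_mul, Matrix.mul_smul, Matrix.smul_mul,
      Matrix.mul_add, Matrix.add_mul, e1, e2]
  -- entrywise geometric decay
  have hFpow : ∀ k a b, F k a b = (1 + Δτ * (μ a + μ b)) ^ k * F 0 a b := by
    intro k
    induction k with
    | zero => intro a b; simp
    | succ m ih =>
      intro a b
      have := hFrec m
      have happ : F (m + 1) a b = (1 + Δτ * (μ a + μ b)) * F m a b := by
        rw [this]
        simp only [Matrix.add_apply, Matrix.smul_apply, Matrix.mul_diagonal,
          Matrix.diagonal_mul, smul_eq_mul]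
        ring
      rw [happ, ih a b]
      ring
  have hr : ∀ a b, |1 + Δτ * (μ a + μ b)| < 1 := by
    intro a b
    rw [abs_lt]
    constructor
    · have := hμ_lb a
      have := hμ_lb b
      nlinarith [hμ_neg a, hμ_neg b]
    · nlinarith [hμ_neg a, hμ_neg b]
  have hFtend : ∀ a b, Tendsto (fun k => F k a b) atTop (nhds 0) := by
    intro a b
    have : Tendsto (fun k => (1 + Δτ * (μ a + μ b)) ^ k * F 0 a b) atTop (nhds (0 * F 0 a b)) :=
      (tendsto_pow_atTop_nhds_zero_of_abs_lt_one (hr a b)).mul_const _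
    rw [zero_mul] at this
    exact this.congr fun k => (hFpow k a b).symm
  -- recover E from F
  have hErec : ∀ k, E k = U * F k * star U := by
    intro k
    simp only [hF_def]
    rw [show U * (star U * E k * U) * star U = (U * star U) * E k * (U * star U) by noncomm_ring]
    rw [hUU', Matrix.one_mul, Matrix.mul_one]
  have hEtend : ∀ i j, Tendsto (fun k => E k i j) atTop (nhds 0) := by
    intro i j
    have heq : ∀ k, E k i j = ∑ a, ∑ b, U i a * F k a b * star U b j := by
      intro k
      rw [hErec k]
      simp only [Matrix.mul_apply, Finset.sum_mul]
      rw [Finset.sum_comm]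
    have h0 : (0 : ℝ) = ∑ a : Fin n, ∑ b : Fin n, (0 : ℝ) := by simp
    rw [show (nhds (0:ℝ)) = nhds (∑ a : Fin n, ∑ b : Fin n, (0 : ℝ)) by rw [← h0]]
    refine Tendsto.congr (fun k => (heq k).symm) ?_
    refine tendsto_finset_sum _ fun a _ => tendsto_finset_sum _ fun b _ => ?_
    simpa using (((hFtend a b).const_mul (U i a)).mul_const (star U b j))
  intro i j
  have : Tendsto (fun k => E k i j + P i j) atTop (nhds (0 + P i j)) :=
    (hEtend i j).add tendsto_const_nhds
  rw [zero_add] at this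
  exact this.congr fun k => by simp [hE_def]
end
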